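/- Write a = H'(2T/3 − η) and b = H'(T/3 + η). Using the T-periodicity of H, the eigenvalues of the Jacobian J3(T/3 + η, 2T/3 − η) are λ1 = −a − b and λ2 = −(1 − α)·a − α·b. Assume a + b > 0 and a < 0, and set α_min = a/(a − b). If α > α_min then λ1 < 0 and λ2 < 0, so (T/3 + η, 2T/3 − η) (which corresponds to a backward tetrapod gait) is a sink; if α_min > 0 and α < α_min then λ1 < 0 < λ2, so it is a saddle point. -/

import Mathlib

open Matrix Polynomial

/-- the eigenvalues of `J3(T/3 + η, 2T/3 − η)` are `−a − b` and
`−(1 − α)·a − α·b`; with `a + b > 0`, `a < 0` and `α_min = a/(a − b)`, the point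
(a backward tetrapod gait) is a sink if `α > α_min`, and a saddle if
`α_min > 0` and `α < α_min`. -/
theorem stmt_8 (T : ℝ) (hT : 0 < T) (H H' : ℝ → ℝ)
    (hH' : ∀ x : ℝ, HasDerivAt H (H' x) x)
    (hper : ∀ θ : ℝ, H (θ + T) = H θ)
    (η : ℝ) (hη : η ∈ Set.Icc (0 : ℝ) (T / 6))
    (α : ℝ) (hα0 : 0 < α) (hα1 : α < 1)
    (J3 : ℝ → ℝ → Matrix (Fin 2) (Fin 2) ℝ)
    (hJ3 : ∀ θ1 θ2 : ℝ, J3 θ1 θ2 =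
      -!![H' (-θ1) + α * H' θ1, (1 - α) * H' θ2;
          α * H' θ1, H' (-θ2) + (1 - α) * H' θ2])
    (a b : ℝ) (ha : a = H' (2 * T / 3 - η)) (hb : b = H' (T / 3 + η))
    (hab : 0 < a + b) (haneg : a < 0)
    (αmin : ℝ) (hαmin : αmin = a / (a - b)) :
    (J3 (T / 3 + η) (2 * T / 3 - η)).charpoly =
      (Polynomial.X - Polynomial.C (-a - b)) *
      (Polynomial.X - Polynomial.C (-(1 - α) * a - α * b)) ∧
    (αmin < α → (-a - b < 0 ∧ -(1 - α) * a - α * b < 0)) ∧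
    ((0 < αmin ∧ α < αmin) → (-a - b < 0 ∧ 0 < -(1 - α) * a - α * b)) := by
  have hper' : ∀ x : ℝ, H' (x + T) = H' x := by
    intro x
    have h1 : HasDerivAt (fun y => H (y + T)) (H' (x + T)) x := by
      simpa [Function.comp_def] using (hH' (x + T)).comp x ((hasDerivAt_id x).add_const T)
    have h2 : (fun y => H (y + T)) = H := funext hper
    rw [h2] at h1
    exact h1.unique (hH' x)
  have e1 : H' (-(T / 3 + η)) = a := by
    rw [ha]
    have := hper' (-(T / 3 + η))
    rw [show -(T / 3 + η) + T = 2 * T / 3 - η by ring] at this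
    exact this.symm
  have e2 : H' (-(2 * T / 3 - η)) = b := by
    rw [hb]
    have := hper' (-(2 * T / 3 - η))
    rw [show -(2 * T / 3 - η) + T = T / 3 + η by ring] at this
    exact this.symm
  have hd : a - b < 0 := by linarith
  refine ⟨?_, ?_, ?_⟩
  · rw [hJ3, e1, e2, ← ha, ← hb]
    rw [Matrix.charpoly, Matrix.det_fin_two]
    simp only [charmatrix_apply_eq, charmatrix_apply_ne, Fin.zero_eq_one_iff,
      Fin.one_eq_zero_iff, Matrix.neg_apply, Matrix.cons_val', Matrix.cons_val_zero,
      Matrix.cons_val_one, Matrix.head_cons, Matrix.empty_val', Matrix.cons_val_fin_one,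
      Matrix.head_fin_const, ne_eq, Fin.ext_iff, Fin.val_zero, Fin.val_one,
      zero_ne_one, one_ne_zero, not_false_eq_true]
    simp only [Matrix.map_apply, Matrix.cons_val', Matrix.cons_val_zero,
      Matrix.cons_val_one, Matrix.head_cons, Matrix.empty_val', Matrix.cons_val_fin_one,
      Matrix.head_fin_const, Polynomial.C_neg, Polynomial.C_add, Polynomial.C_mul,
      Polynomial.C_sub, Polynomial.C_1]
    norm_num [Matrix.cons_val_zero, Matrix.cons_val_one, Matrix.head_cons]
    ring
  · intro h
    rw [hαmin] at h
    have := (div_lt_iff_of_neg hd).mp h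
    constructor <;> nlinarith
  · rintro ⟨h0, h⟩
    rw [hαmin] at h
    have := (lt_div_iff_of_neg hd).mp h
    constructor <;> nlinarith
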